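/- Let A and B be n×n matrices over a field F and let D be an n×n diagonal matrix such that A+D and B+D are invertible. Then A and B are principal minor equivalent if and only if (A+D)^{-1} and (B+D)^{-1} are principal minor equivalent. -/

import Mathlib

open Matrix

/-- Principal minor equivalence: all corresponding principal minors agree. -/
def PrincipalMinorEquiv {F : Type*} [Field F] {m : Type*} [Fintype m] [DecidableEq m]
    (A B : Matrix m m F) : Prop :=
  ∀ S : Finset m,
    (A.submatrix (fun i : S => (i : m)) (fun i : S => (i : m))).det =
    (B.submatrix (fun i : S => (i : m)) (fun i : S => (i : m))).det

section Aux

variable {F : Type*} [Field F]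

/-- Reindexing a square submatrix by an equivalence preserves the determinant. -/
lemma det_submatrix_comp {m ι κ : Type*} [Fintype ι] [DecidableEq ι] [Fintype κ] [DecidableEq κ]
    (A : Matrix m m F) (f : ι → m) (e : κ ≃ ι) :
    (A.submatrix (f ∘ e) (f ∘ e)).det = (A.submatrix f f).det := by
  rw [← Matrix.submatrix_submatrix, Matrix.det_submatrix_equiv_self]

/-- Jacobi's identity: the principal minor of the inverse times the determinant equals
the complementary principal minor. -/
lemma jacobi {n : ℕ} (M : Matrix (Fin n) (Fin n) F) (hM : IsUnit M.det) (S : Finset (Fin n)) :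
    ((M⁻¹).submatrix (fun i : S => (i : Fin n)) (fun i : S => (i : Fin n))).det * M.det =
    (M.submatrix (fun i : (Sᶜ : Finset (Fin n)) => (i : Fin n))
      (fun i : (Sᶜ : Finset (Fin n)) => (i : Fin n))).det := by
  classical
  set p : Fin n → Prop := fun i => i ∈ S with hp
  let e : {a // p a} ⊕ {a // ¬ p a} ≃ Fin n := Equiv.sumCompl p
  set M' := M.submatrix e e with hM'
  set N' := (M⁻¹).submatrix e e with hN'
  have hMN : M' * N' = 1 := by
    rw [hM', hN', Matrix.submatrix_mul_equiv, Matrix.mul_nonsing_inv _ hM,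
      Matrix.submatrix_one_equiv]
  have h11 : M'.toBlocks₁₁ * N'.toBlocks₁₁ + M'.toBlocks₁₂ * N'.toBlocks₂₁ = 1 := by
    have := congrArg Matrix.toBlocks₁₁ hMN
    rwa [← Matrix.fromBlocks_toBlocks M', ← Matrix.fromBlocks_toBlocks N',
      Matrix.fromBlocks_multiply, ← Matrix.fromBlocks_one, Matrix.toBlocks_fromBlocks₁₁,
      Matrix.toBlocks_fromBlocks₁₁] at this
  have h21 : M'.toBlocks₂₁ * N'.toBlocks₁₁ + M'.toBlocks₂₂ * N'.toBlocks₂₁ = 0 := by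
    have := congrArg Matrix.toBlocks₂₁ hMN
    rwa [← Matrix.fromBlocks_toBlocks M', ← Matrix.fromBlocks_toBlocks N',
      Matrix.fromBlocks_multiply, ← Matrix.fromBlocks_one, Matrix.toBlocks_fromBlocks₂₁,
      Matrix.toBlocks_fromBlocks₂₁] at this
  have key : M' * fromBlocks N'.toBlocks₁₁ 0 N'.toBlocks₂₁ 1 =
      fromBlocks 1 M'.toBlocks₁₂ 0 M'.toBlocks₂₂ := by
    conv_lhs => rw [← Matrix.fromBlocks_toBlocks M']
    rw [Matrix.fromBlocks_multiply]
    rw [h11]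
    simp [h21]
  have hdet := congrArg Matrix.det key
  rw [Matrix.det_mul, Matrix.det_fromBlocks_zero₁₂, Matrix.det_fromBlocks_zero₂₁,
    Matrix.det_one, Matrix.det_one, one_mul, mul_one] at hdet
  have hPdet : M'.det = M.det := Matrix.det_submatrix_equiv_self e M
  have hN11 : N'.toBlocks₁₁ =
      (M⁻¹).submatrix (fun i : S => (i : Fin n)) (fun i : S => (i : Fin n)) := by
    ext i j
    simp [hN', Matrix.toBlocks₁₁, e]
  have hM22 : M'.toBlocks₂₂.det =
      (M.submatrix (fun i : (Sᶜ : Finset (Fin n)) => (i : Fin n))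
        (fun i : (Sᶜ : Finset (Fin n)) => (i : Fin n))).det := by
    let e2 : {a // ¬ p a} ≃ {a : Fin n // a ∈ (Sᶜ : Finset (Fin n))} :=
      Equiv.subtypeEquivRight (by simp [hp])
    have : M'.toBlocks₂₂ = M.submatrix
        ((fun i : (Sᶜ : Finset (Fin n)) => (i : Fin n)) ∘ e2)
        ((fun i : (Sᶜ : Finset (Fin n)) => (i : Fin n)) ∘ e2) := by
      ext i j
      simp [hM', Matrix.toBlocks₂₂, e, e2, Equiv.subtypeEquivRight]
      rfl
    rw [this, det_submatrix_comp]
  rw [← hN11, ← hM22, ← hPdet, mul_comm, hdet]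

/-- det of a matrix whose rows off `T` are scaled basis vectors. -/
lemma det_piecewise {m : Type*} [Fintype m] [DecidableEq m]
    (A : Matrix m m F) (d : m → F) (T : Finset m) :
    (Matrix.of (T.piecewise A (fun i => Pi.single i (d i)))).det =
      (A.submatrix (fun i : T => (i : m)) (fun i : T => (i : m))).det * ∏ i ∈ Tᶜ, d i := by
  classical
  set M : Matrix m m F := Matrix.of (T.piecewise A (fun i => Pi.single i (d i))) with hMdef
  let e : {a // a ∈ T} ⊕ {a // ¬ a ∈ T} ≃ m := Equiv.sumCompl (· ∈ T)
  have hblock : M.submatrix e e =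
      fromBlocks (A.submatrix (fun i : T => (i : m)) (fun i : T => (i : m)))
        ((M.submatrix e e).toBlocks₁₂) 0
        (Matrix.diagonal (fun i : {a // ¬ a ∈ T} => d i)) := by
    ext i j
    cases i with
    | inl i =>
      cases j with
      | inl j => simp [hMdef, e, Finset.piecewise_eq_of_mem _ _ _ i.2, Finset.piecewise, i.2]
      | inr j => simp [Matrix.toBlocks₁₂, e]
    | inr i =>
      cases j with
      | inl j =>
        have hij : (j : m) ≠ (i : m) := fun h => i.2 (h ▸ j.2)
        simp [hMdef, e, Finset.piecewise_eq_of_notMem _ _ _ i.2, Finset.piecewise, i.2, Pi.single_apply, hij]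
      | inr j =>
        by_cases h : (i : m) = (j : m)
        · have : i = j := Subtype.ext h
          simp [hMdef, e, this, Finset.piecewise_eq_of_notMem _ _ _ j.2, Finset.piecewise, j.2, Pi.single_apply]
        · have h' : i ≠ j := fun hh => h (by rw [hh])
          simp [hMdef, e, Finset.piecewise_eq_of_notMem _ _ _ i.2, Finset.piecewise, i.2, Pi.single_apply,
            Matrix.diagonal_apply_ne _ h', h, Ne.symm h]
  have hd : M.det = (M.submatrix e e).det := (Matrix.det_submatrix_equiv_self e M).symm
  rw [hd, hblock, Matrix.det_fromBlocks_zero₂₁, Matrix.det_diagonal]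
  congr 1
  exact Finset.prod_subtype Tᶜ (fun x => Finset.mem_compl) d |>.symm

/-- Expansion of `det (A + diagonal d)` over subsets. -/
lemma det_add_diagonal {m : Type*} [Fintype m] [DecidableEq m]
    (A : Matrix m m F) (d : m → F) :
    (A + Matrix.diagonal d).det =
      ∑ T : Finset m, (A.submatrix (fun i : T => (i : m)) (fun i : T => (i : m))).det *
        ∏ i ∈ Tᶜ, d i := by
  classical
  have hrows : (A + Matrix.diagonal d) = Matrix.of (fun i => A i + Pi.single i (d i)) := by
    ext i j
    by_cases h : i = j <;> simp [Matrix.diagonal_apply, Pi.single_apply, h, eq_comm]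
  have hdet : (A + Matrix.diagonal d).det =
      (Matrix.detRowAlternating (R := F) (n := m)) (fun i => A i + Pi.single i (d i)) := by
    rw [hrows]; rfl
  rw [hdet]
  have := (Matrix.detRowAlternating (R := F) (n := m)).toMultilinearMap.map_add_univ
    (fun i => A i) (fun i => Pi.single i (d i))
  refine Eq.trans this ?_
  refine Finset.sum_congr rfl fun T _ => ?_
  rw [← det_piecewise A d T]
  rfl

/-- PME is preserved by adding a diagonal matrix. -/
lemma pme_add_diagonal {m : Type*} [Fintype m] [DecidableEq m] {A B : Matrix m m F}
    (h : PrincipalMinorEquiv A B) (d : m → F) :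
    PrincipalMinorEquiv (A + Matrix.diagonal d) (B + Matrix.diagonal d) := by
  classical
  intro S
  have hsub : ∀ C : Matrix m m F,
      (C + Matrix.diagonal d).submatrix (fun i : S => (i : m)) (fun i : S => (i : m)) =
      C.submatrix (fun i : S => (i : m)) (fun i : S => (i : m)) +
        Matrix.diagonal (fun i : S => d i) := by
    intro C
    ext i j
    by_cases hij : i = j
    · subst hij; simp
    · have : (i : m) ≠ (j : m) := fun hh => hij (Subtype.ext hh)
      simp [Matrix.diagonal_apply_ne _ this, Matrix.diagonal_apply_ne _ hij]
  have key : ∀ (C : Matrix m m F) (T : Finset {x // x ∈ S}),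
      ((C.submatrix (fun i : S => (i : m)) (fun i : S => (i : m))).submatrix
        (fun i : T => (i : {x // x ∈ S})) (fun i : T => (i : {x // x ∈ S}))).det =
      (C.submatrix (fun i : T.map (Function.Embedding.subtype _) => (i : m))
        (fun i : T.map (Function.Embedding.subtype _) => (i : m))).det := by
    intro C T
    have hbij : Function.Bijective (fun x : {y // y ∈ T} =>
        (⟨(x : {x // x ∈ S}), Finset.mem_map_of_mem _ x.2⟩ :
          {a // a ∈ T.map (Function.Embedding.subtype _)})) := by
      constructor
      · intro x y hxy
        apply Subtype.ext; apply Subtype.ext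
        have hxy' := congrArg Subtype.val hxy
        exact hxy'
      · rintro ⟨a, ha⟩
        obtain ⟨x, hx, hxa⟩ := Finset.mem_map.mp ha
        exact ⟨⟨x, hx⟩, Subtype.ext hxa⟩
    let e := Equiv.ofBijective _ hbij
    rw [Matrix.submatrix_submatrix]
    exact det_submatrix_comp C (fun i : T.map (Function.Embedding.subtype _) => (i : m)) e
  rw [hsub A, hsub B, det_add_diagonal, det_add_diagonal]
  refine Finset.sum_congr rfl fun T _ => ?_
  rw [key A T, key B T, h (T.map (Function.Embedding.subtype _))]

/-- The principal minor at `univ` is the determinant. -/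
lemma det_submatrix_univ {n : ℕ} (C : Matrix (Fin n) (Fin n) F) :
    (C.submatrix (fun i : (Finset.univ : Finset (Fin n)) => (i : Fin n))
      (fun i : (Finset.univ : Finset (Fin n)) => (i : Fin n))).det = C.det := by
  have he : (fun i : (Finset.univ : Finset (Fin n)) => (i : Fin n)) =
      ⇑(Equiv.subtypeUnivEquiv (fun x : Fin n => Finset.mem_univ x)) := rfl
  rw [he]
  exact Matrix.det_submatrix_equiv_self _ C

/-- PME passes to inverses. -/
lemma pme_inv {n : ℕ} {M N : Matrix (Fin n) (Fin n) F}
    (hM : IsUnit M.det) (hN : IsUnit N.det) (h : PrincipalMinorEquiv M N) :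
    PrincipalMinorEquiv M⁻¹ N⁻¹ := by
  have hdet : M.det = N.det := by
    have := h Finset.univ
    rwa [det_submatrix_univ, det_submatrix_univ] at this
  intro S
  have j1 := jacobi M hM S
  have j2 := jacobi N hN S
  rw [← h Sᶜ, ← j1, hdet] at j2
  exact (mul_right_cancel₀ hN.ne_zero j2).symm

end Aux

theorem pme_iff_pme_inverse {n : ℕ} {F : Type*} [Field F]
    (A B : Matrix (Fin n) (Fin n) F) (d : Fin n → F)
    (hA : IsUnit (A + Matrix.diagonal d).det)
    (hB : IsUnit (B + Matrix.diagonal d).det) :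
    PrincipalMinorEquiv A B ↔
      PrincipalMinorEquiv (A + Matrix.diagonal d)⁻¹ (B + Matrix.diagonal d)⁻¹ := by
  constructor
  · intro h
    exact pme_inv hA hB (pme_add_diagonal h d)
  · intro h
    have h2 := pme_inv (Matrix.isUnit_nonsing_inv_det _ hA) (Matrix.isUnit_nonsing_inv_det _ hB) h
    rw [Matrix.nonsing_inv_nonsing_inv _ hA, Matrix.nonsing_inv_nonsing_inv _ hB] at h2
    have h3 := pme_add_diagonal h2 (-d)
    have hcancel : ∀ C : Matrix (Fin n) (Fin n) F,
        (C + Matrix.diagonal d) + Matrix.diagonal (-d) = C := by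
      intro C
      rw [show (-d : Fin n → F) = fun i => -d i from rfl, ← Matrix.diagonal_neg, add_neg_cancel_right]
    rwa [hcancel A, hcancel B] at h3
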